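/- For m = 4, every subset β ⊆ {1,2,3,4}, and every integer j ≥ 5: Z(P_{4,j}(∅,β)) = −Z(P_{4,j−3}(∅,β)). -/

import Mathlib

/-- Adjacency in the square grid graph on ℤ²: `v` and `w` are adjacent iff
`|v₁ − w₁| + |v₂ − w₂| = 1`. -/
def gridAdj (v w : ℤ × ℤ) : Prop :=
  (v.1 - w.1).natAbs + (v.2 - w.2).natAbs = 1

/-- `σ` is an `(A,B)`-configuration on the parallelogram `P_{m,n}`:
an independent set of the induced subgraph of the grid on
`{(a,b) : 1 ≤ a ≤ m, 1 − a < b ≤ 1 − a + n}` whose trace on the left boundary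
`{(a, 2−a)}` is prescribed by `A` and on the right boundary `{(a, 1−a+n)}`
by `B`. -/
def ParaConfig (m n : ℕ) (A B : Finset ℕ) (σ : Finset (ℤ × ℤ)) : Prop :=
  (∀ p ∈ σ, 1 ≤ p.1 ∧ p.1 ≤ (m : ℤ) ∧ 1 - p.1 < p.2 ∧ p.2 ≤ 1 - p.1 + (n : ℤ)) ∧
  (∀ v ∈ σ, ∀ w ∈ σ, ¬ gridAdj v w) ∧
  (∀ a : ℕ, 1 ≤ a → a ≤ m →
    ((((a : ℤ), 2 - (a : ℤ)) ∈ σ ↔ a ∈ A) ∧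
     (((a : ℤ), 1 - (a : ℤ) + (n : ℤ)) ∈ σ ↔ a ∈ B)))

/-- `Z(P_{m,n}(A,B)) = Σ_σ (−1)^{|σ|}` over all `(A,B)`-configurations `σ`. -/
noncomputable def Zpara (m n : ℕ) (A B : Finset ℕ) : ℤ :=
  ∑ᶠ σ ∈ {σ : Finset (ℤ × ℤ) | ParaConfig m n A B σ}, (-1 : ℤ) ^ σ.card

/-- The generating function
`G_{A,A}(t) = 1 + (−1)^{|A|} Σ_{n ≥ 1} Z(P_{m,n+1}(A,A)) tⁿ ∈ ℤ[[t]]`. -/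
noncomputable def Gser (m : ℕ) (A : Finset ℕ) : PowerSeries ℤ :=
  PowerSeries.mk fun k => if k = 0 then 1 else (-1 : ℤ) ^ A.card * Zpara m (k + 1) A A

-- vertex set
noncomputable def Vset (m n : ℕ) : Finset (ℤ × ℤ) :=
  (Finset.Icc (1:ℤ) (m:ℤ) ×ˢ Finset.Icc (2 - (m:ℤ)) (n:ℤ)).filter
    (fun p => 1 - p.1 < p.2 ∧ p.2 ≤ 1 - p.1 + (n:ℤ))

lemma config_subset_Vset {m n : ℕ} {A B : Finset ℕ} {σ : Finset (ℤ × ℤ)}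
    (h : ParaConfig m n A B σ) : σ ⊆ Vset m n := by
  intro p hp
  obtain ⟨h1, h2, h3, h4⟩ := h.1 p hp
  simp only [Vset, Finset.mem_filter, Finset.mem_product, Finset.mem_Icc]
  exact ⟨⟨⟨h1, h2⟩, by omega, by omega⟩, h3, h4⟩

open Classical in
noncomputable def CF (m n : ℕ) (A B : Finset ℕ) : Finset (Finset (ℤ × ℤ)) :=
  (Vset m n).powerset.filter (fun σ => ParaConfig m n A B σ)

lemma mem_CF {m n : ℕ} {A B : Finset ℕ} {σ : Finset (ℤ × ℤ)} :
    σ ∈ CF m n A B ↔ ParaConfig m n A B σ := by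
  classical
  simp only [CF, Finset.mem_filter, Finset.mem_powerset]
  exact ⟨fun h => h.2, fun h => ⟨config_subset_Vset h, h⟩⟩

lemma Zpara_eq_sum (m n : ℕ) (A B : Finset ℕ) :
    Zpara m n A B = ∑ σ ∈ CF m n A B, (-1 : ℤ) ^ σ.card := by
  rw [Zpara, ← finsum_mem_coe_finset]
  congr 1
  ext σ
  simp [mem_CF]

-- compatibility of adjacent columns
def compatF (S T : Finset ℕ) : Prop := Disjoint S T ∧ ∀ a ∈ S, a + 1 ∉ T

instance : ∀ S T : Finset ℕ, Decidable (compatF S T) := fun S T => by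
  unfold compatF; infer_instance

-- the right boundary column of P_{m,n}
def rcol (n : ℕ) (β : Finset ℕ) : Finset (ℤ × ℤ) :=
  β.image fun a : ℕ => ((a : ℤ), 1 - (a : ℤ) + (n : ℤ))

-- read off column of σ at diagonal position b = 1 - a + n
def colread (n : ℕ) (σ : Finset (ℤ × ℤ)) : Finset ℕ :=
  (Finset.Icc 1 4).filter (fun a => (((a : ℤ)), 1 - (a : ℤ) + (n : ℤ)) ∈ σ)

lemma colread_subset (n : ℕ) (σ : Finset (ℤ × ℤ)) : colread n σ ⊆ Finset.Icc 1 4 :=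
  Finset.filter_subset _ _

lemma mem_rcol {n : ℕ} {β : Finset ℕ} {p : ℤ × ℤ} :
    p ∈ rcol n β ↔ ∃ a ∈ β, (a : ℤ) = p.1 ∧ p.2 = 1 - p.1 + (n : ℤ) := by
  simp only [rcol, Finset.mem_image, Prod.ext_iff]
  constructor
  · rintro ⟨a, ha, h1, h2⟩; exact ⟨a, ha, h1, by rw [← h1]; exact h2.symm⟩
  · rintro ⟨a, ha, h1, h2⟩; exact ⟨a, ha, h1, by rw [h1]; exact h2.symm⟩

lemma fwd {n : ℕ} (hn : 1 ≤ n) {β : Finset ℕ} {σ : Finset (ℤ × ℤ)}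
    (h : ParaConfig 4 (n + 1) ∅ β σ) :
    ParaConfig 4 n ∅ (colread n σ) (σ.filter (fun p => p.2 ≤ 1 - p.1 + (n : ℤ))) := by
  obtain ⟨hb, hind, hbd⟩ := h
  refine ⟨?_, ?_, ?_⟩
  · intro p hp
    rw [Finset.mem_filter] at hp
    obtain ⟨h1, h2, h3, _⟩ := hb p hp.1
    exact ⟨h1, h2, h3, hp.2⟩
  · intro v hv w hw
    exact hind v (Finset.filter_subset _ _ hv) w (Finset.filter_subset _ _ hw)
  · intro a ha1 ha4
    obtain ⟨hL, hR⟩ := hbd a ha1 ha4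
    constructor
    · rw [Finset.mem_filter]
      constructor
      · rintro ⟨hm, -⟩; exact hL.1 hm
      · intro hm; exact absurd hm (Finset.notMem_empty a)
    · rw [Finset.mem_filter]
      simp only [colread, Finset.mem_filter, Finset.mem_Icc]
      constructor
      · rintro ⟨hm, -⟩; exact ⟨⟨ha1, ha4⟩, hm⟩
      · rintro ⟨-, hm⟩; exact ⟨hm, le_refl _⟩

lemma mem_S_of_right {n : ℕ} {S : Finset ℕ} {τ : Finset (ℤ × ℤ)}
    (h : ParaConfig 4 n ∅ S τ) {p : ℤ × ℤ} (hp : p ∈ τ)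
    (hp2 : p.2 = 1 - p.1 + (n : ℤ)) : p.1.toNat ∈ S := by
  obtain ⟨h1, h2, -, -⟩ := h.1 p hp
  have hc : ((p.1.toNat : ℤ)) = p.1 := by omega
  have := (h.2.2 p.1.toNat (by omega) (by omega)).2
  rw [← this, hc]
  have : ((p.1, p.2) : ℤ × ℤ) = p := rfl
  rw [← hp2, this]
  exact hp

lemma bwd {n : ℕ} (hn : 1 ≤ n) {β S : Finset ℕ} (hβ : β ⊆ Finset.Icc 1 4)
    (hc : compatF S β) {τ : Finset (ℤ × ℤ)} (h : ParaConfig 4 n ∅ S τ) :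
    ParaConfig 4 (n + 1) ∅ β (τ ∪ rcol (n + 1) β) := by
  have hcast : ((n + 1 : ℕ) : ℤ) = (n : ℤ) + 1 := by push_cast; ring
  have key : ∀ p ∈ τ, ∀ q ∈ rcol (n + 1) β, ¬ gridAdj p q := by
    intro p hp q hq hadj
    obtain ⟨a, haβ, ha1, ha2⟩ := mem_rcol.mp hq
    obtain ⟨ha1', ha4'⟩ := Finset.mem_Icc.mp (hβ haβ)
    obtain ⟨hb1, hb2, hb3, hb4⟩ := h.1 p hp
    unfold gridAdj at hadj
    rw [hcast] at ha2
    -- case analysis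
    rcases (by omega :
        (p.1 = q.1 ∧ (p.2 = q.2 + 1 ∨ p.2 = q.2 - 1)) ∨
        (p.2 = q.2 ∧ (p.1 = q.1 + 1 ∨ p.1 = q.1 - 1))) with
      ⟨he, hv⟩ | ⟨he, hv⟩
    · rcases hv with hv | hv
      · omega
      · -- p = (a, 1 - a + n) : p.1.toNat ∈ S and = a, contradicting disjointness
        have hmem : p.1.toNat ∈ S := mem_S_of_right h hp (by omega)
        have : p.1.toNat = a := by omega
        rw [this] at hmem
        exact (Finset.disjoint_left.mp hc.1 hmem) haβ
    · rcases hv with hv | hv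
      · omega
      · -- p = (a - 1, 1 - (a-1) + n), so p.1.toNat ∈ S and p.1.toNat + 1 = a ∈ β
        have hmem : p.1.toNat ∈ S := mem_S_of_right h hp (by omega)
        have : p.1.toNat + 1 = a := by omega
        exact (hc.2 p.1.toNat hmem) (this ▸ haβ)
  refine ⟨?_, ?_, ?_⟩
  · intro p hp
    rcases Finset.mem_union.mp hp with hp | hp
    · obtain ⟨h1, h2, h3, h4⟩ := h.1 p hp
      exact ⟨h1, h2, h3, by omega⟩
    · obtain ⟨a, haβ, ha1, ha2⟩ := mem_rcol.mp hp
      obtain ⟨hb1, hb2⟩ := Finset.mem_Icc.mp (hβ haβ)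
      rw [hcast] at ha2
      constructor
      · omega
      · refine ⟨by omega, by omega, by omega⟩
  · intro v hv w hw hadj
    rcases Finset.mem_union.mp hv with hv' | hv' <;>
      rcases Finset.mem_union.mp hw with hw' | hw'
    · exact h.2.1 v hv' w hw' hadj
    · exact key v hv' w hw' hadj
    · exact key w hw' v hv' (by unfold gridAdj at hadj ⊢; omega)
    · obtain ⟨a, haβ, ha1, ha2⟩ := mem_rcol.mp hv'
      obtain ⟨a', haβ', ha1', ha2'⟩ := mem_rcol.mp hw'
      unfold gridAdj at hadj
      omega
  · intro a ha1 ha4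
    obtain ⟨hL, hR⟩ := h.2.2 a ha1 ha4
    constructor
    · rw [Finset.mem_union]
      constructor
      · rintro (hm | hm)
        · exact hL.1 hm
        · obtain ⟨a', -, hb1, hb2⟩ := mem_rcol.mp hm
          simp only at hb1 hb2
          rw [hcast] at hb2
          omega
      · intro hm; exact absurd hm (Finset.notMem_empty a)
    · rw [Finset.mem_union]
      constructor
      · rintro (hm | hm)
        · obtain ⟨-, -, -, h4⟩ := h.1 _ hm
          simp only at h4
          rw [hcast] at h4
          omega
        · obtain ⟨a', ha', hb1, hb2⟩ := mem_rcol.mp hm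
          simp only at hb1
          have : a' = a := by exact_mod_cast hb1
          rwa [← this]
      · intro hm
        refine Or.inr (mem_rcol.mpr ⟨a, hm, rfl, rfl⟩)

lemma colread_bwd {n : ℕ} {β S : Finset ℕ} (hS : S ⊆ Finset.Icc 1 4)
    {τ : Finset (ℤ × ℤ)} (h : ParaConfig 4 n ∅ S τ) :
    colread n (τ ∪ rcol (n + 1) β) = S := by
  ext a
  simp only [colread, Finset.mem_filter, Finset.mem_Icc, Finset.mem_union]
  constructor
  · rintro ⟨⟨ha1, ha4⟩, hm | hm⟩
    · exact ((h.2.2 a ha1 ha4).2).1 hm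
    · obtain ⟨a', -, hb1, hb2⟩ := mem_rcol.mp hm
      simp only at hb1 hb2
      have hcast : ((n + 1 : ℕ) : ℤ) = (n : ℤ) + 1 := by push_cast; ring
      rw [hcast] at hb2
      omega
  · intro ha
    obtain ⟨ha1, ha4⟩ := Finset.mem_Icc.mp (hS ha)
    exact ⟨⟨ha1, ha4⟩, Or.inl (((h.2.2 a ha1 ha4).2).2 ha)⟩

lemma leftinv {n : ℕ} {β : Finset ℕ} (hβ : β ⊆ Finset.Icc 1 4)
    {σ : Finset (ℤ × ℤ)} (h : ParaConfig 4 (n + 1) ∅ β σ) :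
    (σ.filter (fun p => p.2 ≤ 1 - p.1 + (n : ℤ))) ∪ rcol (n + 1) β = σ := by
  have hcast : ((n + 1 : ℕ) : ℤ) = (n : ℤ) + 1 := by push_cast; ring
  apply Finset.Subset.antisymm
  · intro p hp
    rcases Finset.mem_union.mp hp with hp | hp
    · exact Finset.filter_subset _ _ hp
    · obtain ⟨a, haβ, hb1, hb2⟩ := mem_rcol.mp hp
      obtain ⟨ha1, ha4⟩ := Finset.mem_Icc.mp (hβ haβ)
      have hmem := ((h.2.2 a ha1 ha4).2).2 haβ
      rw [hcast] at hmem
      have hpe : p = ((a : ℤ), 1 - (a : ℤ) + ((n : ℤ) + 1)) := by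
        rw [Prod.ext_iff]; constructor <;> simp only <;> omega
      rw [hpe]; exact hmem
  · intro p hp
    obtain ⟨h1, h2, h3, h4⟩ := h.1 p hp
    rw [hcast] at h4
    by_cases hle : p.2 ≤ 1 - p.1 + (n : ℤ)
    · exact Finset.mem_union_left _ (Finset.mem_filter.mpr ⟨hp, hle⟩)
    · -- p.2 = 1 - p.1 + n + 1, so p is on the right boundary
      refine Finset.mem_union_right _ (mem_rcol.mpr ⟨p.1.toNat, ?_, by omega, by rw [hcast]; omega⟩)
      have hc : ((p.1.toNat : ℤ)) = p.1 := by omega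
      have := ((h.2.2 p.1.toNat (by omega) (by omega)).2).1
      apply this
      have hpe : ((p.1.toNat : ℤ), 1 - (p.1.toNat : ℤ) + ((n + 1 : ℕ) : ℤ)) = p := by
        rw [Prod.ext_iff]; constructor <;> simp only <;> omega
      rwa [hpe]

lemma rightinv {n : ℕ} {β S : Finset ℕ} {τ : Finset (ℤ × ℤ)}
    (h : ParaConfig 4 n ∅ S τ) :
    (τ ∪ rcol (n + 1) β).filter (fun p => p.2 ≤ 1 - p.1 + (n : ℤ)) = τ := by
  have hcast : ((n + 1 : ℕ) : ℤ) = (n : ℤ) + 1 := by push_cast; ring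
  ext p
  rw [Finset.mem_filter, Finset.mem_union]
  constructor
  · rintro ⟨hm | hm, hle⟩
    · exact hm
    · obtain ⟨a, -, hb1, hb2⟩ := mem_rcol.mp hm
      rw [hcast] at hb2
      omega
  · intro hm
    obtain ⟨-, -, -, h4⟩ := h.1 p hm
    exact ⟨Or.inl hm, h4⟩

lemma card_union_rcol {n : ℕ} {β S : Finset ℕ} {τ : Finset (ℤ × ℤ)}
    (h : ParaConfig 4 n ∅ S τ) :
    (τ ∪ rcol (n + 1) β).card = τ.card + β.card := by
  have hcast : ((n + 1 : ℕ) : ℤ) = (n : ℤ) + 1 := by push_cast; ring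
  have hdisj : Disjoint τ (rcol (n + 1) β) := by
    rw [Finset.disjoint_left]
    intro p hp hm
    obtain ⟨-, -, -, h4⟩ := h.1 p hp
    obtain ⟨a, -, hb1, hb2⟩ := mem_rcol.mp hm
    rw [hcast] at hb2
    omega
  have hinj : Function.Injective
      (fun a : ℕ => ((a : ℤ), 1 - (a : ℤ) + ((n + 1 : ℕ) : ℤ))) := by
    intro a b hab
    simp only [Prod.ext_iff] at hab
    exact_mod_cast hab.1
  have hcard : (rcol (n + 1) β).card = β.card := Finset.card_image_of_injective β hinj
  rw [Finset.card_union_of_disjoint hdisj, hcard]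

lemma Zpara_rec (n : ℕ) (hn : 1 ≤ n) (β : Finset ℕ) (hβ : β ⊆ Finset.Icc 1 4) :
    Zpara 4 (n + 1) ∅ β =
      (-1 : ℤ) ^ β.card * ∑ S ∈ (Finset.Icc 1 4).powerset,
        (if compatF S β then Zpara 4 n ∅ S else 0) := by
  have hcast : ((n + 1 : ℕ) : ℤ) = (n : ℤ) + 1 := by push_cast; ring
  rw [Zpara_eq_sum, Finset.mul_sum]
  have hmaps : ∀ σ ∈ CF 4 (n+1) ∅ β, colread n σ ∈ (Finset.Icc 1 4).powerset :=
    fun σ _ => Finset.mem_powerset.mpr (colread_subset n σ)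
  rw [← Finset.sum_fiberwise_of_maps_to hmaps (fun σ => (-1 : ℤ) ^ σ.card)]
  apply Finset.sum_congr rfl
  intro S hS
  have hS4 := Finset.mem_powerset.mp hS
  by_cases hcomp : compatF S β
  · rw [if_pos hcomp, Zpara_eq_sum, Finset.mul_sum]
    apply Finset.sum_nbij'
      (i := fun σ => σ.filter (fun p => p.2 ≤ 1 - p.1 + (n : ℤ)))
      (j := fun τ => τ ∪ rcol (n + 1) β)
    · intro σ hσ
      rw [Finset.mem_filter] at hσ
      obtain ⟨hσc, hcol⟩ := hσ
      rw [mem_CF]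
      have := fwd hn (mem_CF.mp hσc)
      rwa [hcol] at this
    · intro τ hτ
      rw [Finset.mem_filter, mem_CF]
      have hτc := mem_CF.mp hτ
      exact ⟨bwd hn hβ hcomp hτc, colread_bwd hS4 hτc⟩
    · intro σ hσ
      rw [Finset.mem_filter] at hσ
      exact leftinv hβ (mem_CF.mp hσ.1)
    · intro τ hτ
      exact rightinv (mem_CF.mp hτ)
    · intro σ hσ
      rw [Finset.mem_filter] at hσ
      obtain ⟨hσc, hcol⟩ := hσ
      have hconf := fwd hn (mem_CF.mp hσc)
      have h1 : (σ.filter (fun p => p.2 ≤ 1 - p.1 + (n : ℤ)) ∪ rcol (n + 1) β) = σ :=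
        leftinv hβ (mem_CF.mp hσc)
      have h2 := card_union_rcol (β := β) hconf
      rw [h1] at h2
      rw [h2, pow_add, mul_comm]
  · rw [if_neg hcomp, mul_zero]
    apply Finset.sum_eq_zero
    intro σ hσ
    exfalso
    apply hcomp
    rw [Finset.mem_filter] at hσ
    obtain ⟨hσc, hcol⟩ := hσ
    have hconf := mem_CF.mp hσc
    have hcolmem : ∀ a ∈ S, ((a : ℤ), 1 - (a : ℤ) + (n : ℤ)) ∈ σ := by
      intro a haS
      have : a ∈ colread n σ := hcol ▸ haS
      simp only [colread, Finset.mem_filter] at this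
      exact this.2
    constructor
    · rw [Finset.disjoint_left]
      intro a haS haβ
      obtain ⟨ha1, ha4⟩ := Finset.mem_Icc.mp (hβ haβ)
      have h1 := hcolmem a haS
      have h2 : ((a : ℤ), 1 - (a : ℤ) + ((n + 1 : ℕ) : ℤ)) ∈ σ :=
        (hconf.2.2 a ha1 ha4).2.mpr haβ
      apply hconf.2.1 _ h1 _ h2
      unfold gridAdj
      simp only
      rw [hcast]
      omega
    · intro a haS haβ
      obtain ⟨ha1, ha4⟩ := Finset.mem_Icc.mp (hβ haβ)
      have h1 := hcolmem a haS
      have h2 : (((a + 1 : ℕ) : ℤ), 1 - ((a + 1 : ℕ) : ℤ) + ((n + 1 : ℕ) : ℤ)) ∈ σ :=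
        (hconf.2.2 (a + 1) (by omega) ha4).2.mpr haβ
      apply hconf.2.1 _ h1 _ h2
      unfold gridAdj
      simp only
      push_cast
      omega

lemma Zpara_one (S : Finset ℕ) (hS : S ⊆ Finset.Icc 1 4) :
    Zpara 4 1 ∅ S = if S = ∅ then 1 else 0 := by
  rw [Zpara_eq_sum]
  by_cases h : S = ∅
  · subst h
    rw [if_pos rfl]
    have hCF : CF 4 1 ∅ ∅ = {∅} := by
      ext σ
      rw [mem_CF, Finset.mem_singleton]
      constructor
      · intro hc
        by_contra hne
        obtain ⟨p, hp⟩ := Finset.nonempty_iff_ne_empty.mpr hne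
        obtain ⟨h1, h2, h3, h4⟩ := hc.1 p hp
        push_cast at h4
        have hmem := (hc.2.2 p.1.toNat (by omega) (by omega)).1
        have hpe : ((p.1.toNat : ℤ), 2 - (p.1.toNat : ℤ)) = p := by
          rw [Prod.ext_iff]; constructor <;> simp only <;> omega
        rw [hpe] at hmem
        exact Finset.notMem_empty _ (hmem.mp hp)
      · rintro rfl
        exact ⟨fun p hp => absurd hp (Finset.notMem_empty p),
          fun v hv => absurd hv (Finset.notMem_empty v),
          fun a _ _ => ⟨by simp, by simp⟩⟩
    rw [hCF, Finset.sum_singleton, Finset.card_empty, pow_zero]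
  · rw [if_neg h]
    have hCF : CF 4 1 ∅ S = ∅ := by
      rw [Finset.eq_empty_iff_forall_notMem]
      intro σ hσ
      have hc := mem_CF.mp hσ
      obtain ⟨a, ha⟩ := Finset.nonempty_iff_ne_empty.mpr h
      obtain ⟨ha1, ha4⟩ := Finset.mem_Icc.mp (hS ha)
      have h1 := (hc.2.2 a ha1 ha4).1
      have h2 := (hc.2.2 a ha1 ha4).2
      have heq : ((a : ℤ), 1 - (a : ℤ) + ((1 : ℕ) : ℤ)) = ((a : ℤ), 2 - (a : ℤ)) := by
        rw [Prod.ext_iff]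
        refine ⟨rfl, ?_⟩
        push_cast
        ring
      rw [heq] at h2
      exact Finset.notMem_empty a (h1.mp (h2.mpr ha))
    rw [hCF, Finset.sum_empty]

def Zc : ℕ → Finset ℕ → ℤ
  | 0, _ => 0
  | 1, S => if S = ∅ then 1 else 0
  | n + 2, β => (-1 : ℤ) ^ β.card *
      ∑ S ∈ (Finset.Icc 1 4).powerset, (if compatF S β then Zc (n + 1) S else 0)

lemma Zpara_eq_Zc : ∀ n, 1 ≤ n → ∀ β, β ⊆ Finset.Icc 1 4 → Zpara 4 n ∅ β = Zc n β := by
  intro n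
  induction n with
  | zero => intro h; exact absurd h (by norm_num)
  | succ n ih =>
    intro _ β hβ
    match n, ih with
    | 0, _ => exact Zpara_one β hβ
    | m + 1, ih =>
      rw [Zpara_rec (m + 1) (by omega) β hβ]
      have hz : Zc (m + 2) β = (-1 : ℤ) ^ β.card *
          ∑ S ∈ (Finset.Icc 1 4).powerset, (if compatF S β then Zc (m + 1) S else 0) := rfl
      rw [hz]
      congr 1
      apply Finset.sum_congr rfl
      intro S hS
      by_cases hc : compatF S β
      · rw [if_pos hc, if_pos hc, ih (by omega) S (Finset.mem_powerset.mp hS)]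
      · rw [if_neg hc, if_neg hc]

lemma Zc_key : ∀ β ∈ (Finset.Icc 1 4).powerset, Zc 5 β = -Zc 2 β := by decide

lemma Zpara_main : ∀ k : ℕ, ∀ β, β ⊆ Finset.Icc 1 4 →
    Zpara 4 (k + 5) ∅ β = -Zpara 4 (k + 2) ∅ β := by
  intro k
  induction k with
  | zero =>
    intro β hβ
    rw [Zpara_eq_Zc 5 (by norm_num) β hβ, Zpara_eq_Zc 2 (by norm_num) β hβ]
    exact Zc_key β (Finset.mem_powerset.mpr hβ)
  | succ k ih =>
    intro β hβ
    have e1 : k + 1 + 5 = (k + 5) + 1 := by ring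
    have e2 : k + 1 + 2 = (k + 2) + 1 := by ring
    rw [e1, e2, Zpara_rec (k + 5) (by omega) β hβ, Zpara_rec (k + 2) (by omega) β hβ]
    have hterm : ∀ S ∈ (Finset.Icc 1 4).powerset,
        (if compatF S β then Zpara 4 (k + 5) ∅ S else 0) =
          -(if compatF S β then Zpara 4 (k + 2) ∅ S else 0) := by
      intro S hS
      by_cases hc : compatF S β
      · rw [if_pos hc, if_pos hc, ih S (Finset.mem_powerset.mp hS)]
      · rw [if_neg hc, if_neg hc, neg_zero]
    rw [Finset.sum_congr rfl hterm, Finset.sum_neg_distrib, mul_neg]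

/-- For `m = 4`, every `β ⊆ {1,2,3,4}` and every `j ≥ 5`,
`Z(P_{4,j}(∅,β)) = −Z(P_{4,j−3}(∅,β))`. -/
theorem Zpara_empty_rec (β : Finset ℕ) (hβ : β ⊆ Finset.Icc 1 4)
    (j : ℕ) (hj : 5 ≤ j) :
    Zpara 4 j ∅ β = -Zpara 4 (j - 3) ∅ β := by
  have h2 : j - 3 = (j - 5) + 2 := by omega
  rw [h2, show j = (j - 5) + 5 by omega]
  exact Zpara_main (j - 5) β hβ
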